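/- For any two functions u, v in L²(S¹), the Hilbert transform satisfies the product formula 𝓗(uv + (𝓗u)(𝓗v)) = u·(𝓗v) + v·(𝓗u). -/

import Mathlib

open MeasureTheory

namespace HilbertAux

open Complex
open scoped ComplexConjugate

local notation "⟪" x ", " y "⟫" => @inner ℂ _ _ x y

lemma sign_identity (a b : ℤ) :
    (a + b).sign * (1 + a.sign * b.sign) = a.sign + b.sign := by
  rcases lt_trichotomy a 0 with ha | rfl | ha
  · rcases lt_trichotomy b 0 with hb | rfl | hb
    · rw [Int.sign_eq_neg_one_of_neg ha, Int.sign_eq_neg_one_of_neg hb,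
        Int.sign_eq_neg_one_of_neg (by omega)]; ring
    · simp
    · rw [Int.sign_eq_neg_one_of_neg ha, Int.sign_eq_one_of_pos hb]; ring
  · simp
  · rcases lt_trichotomy b 0 with hb | rfl | hb
    · rw [Int.sign_eq_one_of_pos ha, Int.sign_eq_neg_one_of_neg hb]; ring
    · simp
    · rw [Int.sign_eq_one_of_pos ha, Int.sign_eq_one_of_pos hb,
        Int.sign_eq_one_of_pos (by omega)]; ring

lemma sign_identity_C (a b : ℤ) (x y : ℂ) :
    ((a + b).sign : ℂ) * (x * y + ((a.sign : ℂ) * x) * ((b.sign : ℂ) * y))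
      = x * ((b.sign : ℂ) * y) + y * ((a.sign : ℂ) * x) := by
  have h : ((a + b).sign : ℂ) * (1 + (a.sign : ℂ) * (b.sign : ℂ))
      = (a.sign : ℂ) + (b.sign : ℂ) := by
    exact_mod_cast congrArg (fun z : ℤ => (z : ℂ)) (sign_identity a b)
  linear_combination x * y * h

lemma sign_identity_C' (a b : ℤ) (x y : ℂ) :
    x * ((b.sign : ℂ) * y) + y * (((a - b).sign : ℂ) * x)
      = (a.sign : ℂ) * (x * y + ((a - b).sign : ℂ) * x * ((b.sign : ℂ) * y)) := by
  have h := sign_identity (a - b) b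
  rw [sub_add_cancel] at h
  have hC : (a.sign : ℂ) * (1 + ((a - b).sign : ℂ) * (b.sign : ℂ))
      = ((a - b).sign : ℂ) + (b.sign : ℂ) := by exact_mod_cast h
  linear_combination (-(x * y)) * hC

variable {T : ℝ} [hT : Fact (0 < T)]

local notation "μ" => @AddCircle.haarAddCircle T hT

lemma fourierBasis_apply' (n : ℤ) : (fourierBasis (T := T)) n = fourierLp 2 n :=
  congrFun coe_fourierBasis n

omit hT in
lemma norm_fourier_apply (n : ℤ) (x : AddCircle T) : ‖fourier n x‖ = 1 := by
  rw [fourier_apply, Circle.norm_coe]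

lemma memLp_conj_mul_fourier (f : Lp ℂ 2 μ) (k : ℤ) :
    MemLp (fun x => conj (f x) * fourier k x) 2 μ := by
  refine (Lp.memLp f).of_le_mul (c := 1)
    (((Complex.continuous_conj.comp_aestronglyMeasurable
      (Lp.aestronglyMeasurable f))).mul (map_continuous (fourier k)).aestronglyMeasurable)
    (Filter.Eventually.of_forall fun x => ?_)
  rw [norm_mul, norm_fourier_apply, RCLike.norm_conj, mul_one, one_mul]

/-- The element `conj f · e_k` of `L²`. -/
noncomputable def F (f : Lp ℂ 2 μ) (k : ℤ) : Lp ℂ 2 μ :=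
  (memLp_conj_mul_fourier f k).toLp _

lemma coeFn_F (f : Lp ℂ 2 μ) (k : ℤ) :
    (F f k : AddCircle T → ℂ) =ᵐ[μ] fun x => conj (f x) * fourier k x :=
  (memLp_conj_mul_fourier f k).coeFn_toLp

lemma inner_F_left (f g : Lp ℂ 2 μ) (k : ℤ) :
    ⟪F f k, g⟫ = ∫ x, conj (fourier k x) * (f x * g x) ∂μ := by
  rw [L2.inner_def]
  refine integral_congr_ae ?_
  filter_upwards [coeFn_F f k] with x hx
  rw [RCLike.inner_apply, hx]
  simp only [map_mul, Complex.conj_conj]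
  ring

lemma inner_F_fourier (f : Lp ℂ 2 μ) (k m : ℤ) :
    ⟪F f k, (fourierBasis (T := T) m : Lp ℂ 2 μ)⟫ = fourierBasis.repr f (k - m) := by
  rw [HilbertBasis.repr_apply_apply]
  simp only [fourierBasis_apply']
  rw [L2.inner_def, L2.inner_def]
  refine integral_congr_ae ?_
  filter_upwards [coeFn_F f k, coeFn_fourierLp 2 m, coeFn_fourierLp 2 (k - m)]
    with x hx hm hkm
  rw [RCLike.inner_apply, RCLike.inner_apply, hx, hm, hkm]
  have h3 : conj (fourier (k - m) x) = fourier m x * conj (fourier k x) := by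
    rw [← fourier_neg, show -(k - m) = m + -k by ring, fourier_add, fourier_neg]
  rw [h3]
  simp only [map_mul, Complex.conj_conj]
  ring

lemma hasSum_conv (f g : Lp ℂ 2 μ) (k : ℤ) :
    HasSum (fun m : ℤ => fourierBasis.repr f (k - m) * fourierBasis.repr g m)
      (∫ x, conj (fourier k x) * (f x * g x) ∂μ) := by
  have h := HilbertBasis.hasSum_inner_mul_inner (fourierBasis (T := T)) (F f k) g
  rw [inner_F_left] at h
  refine h.congr_fun fun m => ?_
  rw [inner_F_fourier, ← HilbertBasis.repr_apply_apply]

lemma repr_H (H : Lp ℂ 2 μ →L[ℂ] Lp ℂ 2 μ)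
    (hH : ∀ n : ℤ, H (fourierLp 2 n) = (Int.sign n : ℂ) • fourierLp 2 n)
    (f : Lp ℂ 2 μ) (k : ℤ) :
    fourierBasis.repr (H f) k = (Int.sign k : ℂ) * fourierBasis.repr f k := by
  have key : (innerSL ℂ ((fourierBasis (T := T) k : Lp ℂ 2 μ))).comp H
      = (Int.sign k : ℂ) • innerSL ℂ ((fourierBasis (T := T) k : Lp ℂ 2 μ)) := by
    refine ContinuousLinearMap.ext_on
      (Submodule.dense_iff_topologicalClosure_eq_top.mpr
        (HilbertBasis.dense_span (fourierBasis (T := T)))) ?_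
    rintro x ⟨n, rfl⟩
    have horth := orthonormal_iff_ite.mp
      (HilbertBasis.orthonormal (fourierBasis (T := T))) k n
    simp only [ContinuousLinearMap.comp_apply, ContinuousLinearMap.smul_apply,
      innerSL_apply_apply, fourierBasis_apply', hH n, inner_smul_right, smul_eq_mul]
    simp only [fourierBasis_apply'] at horth
    rw [horth]
    rcases eq_or_ne k n with rfl | hkn
    · simp
    · simp [hkn]
  have h := congrArg (fun L : Lp ℂ 2 μ →L[ℂ] ℂ => L f) key
  simp only [ContinuousLinearMap.comp_apply, ContinuousLinearMap.smul_apply,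
    innerSL_apply_apply, smul_eq_mul] at h
  rw [HilbertBasis.repr_apply_apply, HilbertBasis.repr_apply_apply]
  exact h

/-- Integrability of `conj (e_k) * (f * g)` for `f g ∈ L²`. -/
lemma integrable_aux (f g : Lp ℂ 2 μ) (k : ℤ) :
    Integrable (fun x => conj (fourier k x) * (f x * g x)) μ := by
  refine (L2.integrable_inner (𝕜 := ℂ) (F f k) g).congr ?_
  filter_upwards [coeFn_F f k] with x hx
  rw [RCLike.inner_apply, hx]
  simp only [map_mul, Complex.conj_conj]
  ring

end HilbertAux

open HilbertAux

/- STATEMENT 3: The Hilbert transform `𝓗` on `L²` of the circle (the bounded operator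
   determined by `𝓗 e^{inθ} = sgn(n) e^{inθ}`, `𝓗 1 = 0`) satisfies the product formula
   `𝓗(uv + (𝓗u)(𝓗v)) = u·(𝓗v) + v·(𝓗u)` whenever all the pointwise products lie in `L²`.
   Here `p` represents (the `L²` class of) `uv + (𝓗u)(𝓗v)` and `q` represents
   `u·(𝓗v) + v·(𝓗u)`. -/
theorem stmt_3 (T : ℝ) [hT : Fact (0 < T)]
    (H : Lp ℂ 2 (@AddCircle.haarAddCircle T hT) →L[ℂ] Lp ℂ 2 (@AddCircle.haarAddCircle T hT))
    (hH : ∀ n : ℤ, H (fourierLp 2 n) = (Int.sign n : ℂ) • fourierLp 2 n)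
    (u v p q : Lp ℂ 2 (@AddCircle.haarAddCircle T hT))
    (hp : ∀ᵐ x ∂(@AddCircle.haarAddCircle T hT),
      p x = u x * v x + (H u) x * (H v) x)
    (hq : ∀ᵐ x ∂(@AddCircle.haarAddCircle T hT),
      q x = u x * (H v) x + v x * (H u) x) :
    H p = q := by
  have hrepr : ∀ f : Lp ℂ 2 (@AddCircle.haarAddCircle T hT), ∀ k : ℤ,
      fourierBasis.repr f k
        = ∫ x, (starRingEnd ℂ) (fourier k x) * f x ∂(@AddCircle.haarAddCircle T hT) := by
    intro f k
    rw [HilbertBasis.repr_apply_apply]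
    simp only [fourierBasis_apply']
    rw [L2.inner_def]
    refine integral_congr_ae ?_
    filter_upwards [coeFn_fourierLp (T := T) 2 k] with x hx
    rw [RCLike.inner_apply, hx]
    ring
  have hpk : ∀ k : ℤ, HasSum
      (fun m : ℤ => fourierBasis.repr u (k - m) * fourierBasis.repr v m
        + fourierBasis.repr (H u) (k - m) * fourierBasis.repr (H v) m)
      (fourierBasis.repr p k) := by
    intro k
    have h12 := (hasSum_conv u v k).add (hasSum_conv (H u) (H v) k)
    have hsum : (∫ x, (starRingEnd ℂ) (fourier k x) * (u x * v x)
          ∂(@AddCircle.haarAddCircle T hT))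
        + (∫ x, (starRingEnd ℂ) (fourier k x) * ((H u) x * (H v) x)
          ∂(@AddCircle.haarAddCircle T hT)) = fourierBasis.repr p k := by
      rw [hrepr p k, ← integral_add (integrable_aux u v k) (integrable_aux (H u) (H v) k)]
      refine integral_congr_ae ?_
      filter_upwards [hp] with x hx
      rw [hx]; ring
    rw [hsum] at h12
    exact h12
  have hq' : ∀ k : ℤ, HasSum
      (fun m : ℤ => fourierBasis.repr u (k - m) * fourierBasis.repr (H v) m
        + fourierBasis.repr v m * fourierBasis.repr (H u) (k - m))
      (fourierBasis.repr q k) := by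
    intro k
    have hq2 := (Equiv.hasSum_iff (Equiv.subLeft k)).mpr (hasSum_conv v (H u) k)
    have h12 := (hasSum_conv u (H v) k).add hq2
    have hsum : (∫ x, (starRingEnd ℂ) (fourier k x) * (u x * (H v) x)
          ∂(@AddCircle.haarAddCircle T hT))
        + (∫ x, (starRingEnd ℂ) (fourier k x) * (v x * (H u) x)
          ∂(@AddCircle.haarAddCircle T hT)) = fourierBasis.repr q k := by
      rw [hrepr q k, ← integral_add (integrable_aux u (H v) k) (integrable_aux v (H u) k)]
      refine integral_congr_ae ?_
      filter_upwards [hq] with x hx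
      rw [hx]; ring
    rw [hsum] at h12
    refine h12.congr_fun fun m => ?_
    simp only [Function.comp, Equiv.subLeft_apply, sub_sub_cancel]
  have key : ∀ k : ℤ, fourierBasis.repr (H p) k = fourierBasis.repr q k := by
    intro k
    rw [repr_H H hH p k]
    have hp' := (hpk k).mul_left ((Int.sign k : ℂ))
    refine HasSum.unique ?_ (hq' k)
    refine hp'.congr_fun fun m => ?_
    rw [repr_H H hH u (k - m), repr_H H hH v m]
    exact sign_identity_C' k m (fourierBasis.repr u (k - m)) (fourierBasis.repr v m)
  exact fourierBasis.repr.injective (by ext k; exact key k)
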